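/- arXiv:2308.01156 — 3 statements merged into one kernel-verified Lean document; each statement's English description precedes it below -/
import Mathlib

section
/- Under Assumption hΔ₀ ⊆ V(h) for all h ∈ (0,ρ] with Δ₀ ⊆ [−1,1]^d open nonempty: for each m ∈ ℕ there exists λ⋆(m) > 0 such that for all h ∈ (0,ρ], the smallest eigenvalue λ_γ of the Gram matrix B_γ = ∫_{V(h)} Φ_γ(u)Φ_γ(u)ᵀ h^{−d} du satisfies λ_γ ≥ λ⋆(m), where Φ_γ(u) = (φ_α(u/h))_{|α| ≤ m}. -/
open MeasureTheory Matrix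
open scoped Pointwise

lemma intOn_bdd {d : ℕ} {s : Set (Fin d → ℝ)} (hs : MeasurableSet s)
    (hμ : volume s ≠ ⊤) {g : (Fin d → ℝ) → ℝ} (hg : Continuous g) {C : ℝ}
    (hb : ∀ u ∈ s, |g u| ≤ C) : IntegrableOn g s := by
  apply Measure.integrableOn_of_bounded hμ hg.aestronglyMeasurable
  filter_upwards [ae_restrict_mem hs] with u hu using hb u hu

lemma mono_bdd {d : ℕ} (α : Fin d → ℕ) (w : Fin d → ℝ) (hw : ∀ j, |w j| ≤ 1) :
    |∏ j, w j ^ α j| ≤ 1 := by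
  rw [Finset.abs_prod]
  refine Finset.prod_le_one (fun j _ => by positivity) fun j _ => ?_
  rw [abs_pow]
  exact pow_le_one₀ (abs_nonneg _) (hw j)
-- quadratic form expansion
lemma quad_expand {d : ℕ} {ι : Type*} [Fintype ι] [DecidableEq ι] (s : Set (Fin d → ℝ))
    (f : ι → (Fin d → ℝ) → ℝ) (c : ℝ)
    (hint : ∀ α β : ι, IntegrableOn (fun u => f α u * f β u * c) s) (v : ι → ℝ) :
    v ⬝ᵥ Matrix.mulVec (Matrix.of fun α β : ι => ∫ u in s, f α u * f β u * c) v
      = ∫ u in s, (∑ α, v α * f α u)^2 * c := by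
  have key : ∀ α β : ι, v α * ((∫ u in s, f α u * f β u * c) * v β)
      = ∫ u in s, v α * (f α u * f β u * c * v β) := by
    intro α β
    rw [← integral_mul_const, ← integral_const_mul]
  simp only [dotProduct, mulVec, Matrix.of_apply, Finset.mul_sum]
  calc ∑ α, ∑ β, v α * ((∫ u in s, f α u * f β u * c) * v β)
      = ∑ α, ∑ β, ∫ u in s, v α * (f α u * f β u * c * v β) := by
        exact Finset.sum_congr rfl fun α _ => Finset.sum_congr rfl fun β _ => key α β
    _ = ∫ u in s, ∑ α, ∑ β, v α * (f α u * f β u * c * v β) := by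
        have hib : ∀ α β : ι, IntegrableOn (fun u => v α * (f α u * f β u * c * v β)) s := by
          intro α β
          have := ((hint α β).mul_const (v β)).const_mul (v α)
          simpa [mul_assoc, IntegrableOn] using this
        rw [integral_finset_sum _ (fun α _ => integrable_finset_sum _ fun β _ => hib α β)]
        exact Finset.sum_congr rfl fun α _ =>
          (integral_finset_sum _ fun β _ => hib α β).symm
    _ = ∫ u in s, (∑ α, v α * f α u)^2 * c := by
        refine integral_congr_ae (Filter.Eventually.of_forall fun u => ?_)
        simp only []
        rw [sq, Finset.sum_mul_sum, Finset.sum_mul]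
        refine Finset.sum_congr rfl fun α _ => ?_
        rw [Finset.sum_mul]
        exact Finset.sum_congr rfl fun β _ => by ring
lemma coeffs_zero {d m : ℕ} [Fintype {α : Fin d → ℕ // ∑ j, α j ≤ m}]
    (v : {α : Fin d → ℕ // ∑ j, α j ≤ m} → ℝ) {U : Set (Fin d → ℝ)} (hU : IsOpen U)
    (hne : U.Nonempty)
    (hz : ∀ w ∈ U, ∑ α : {α : Fin d → ℕ // ∑ j, α j ≤ m}, v α * ∏ j, w j ^ α.1 j = 0) :
    v = 0 := by
  set p : (Fin d → ℝ) → ℝ :=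
    fun w => ∑ α : {α : Fin d → ℕ // ∑ j, α j ≤ m}, v α * ∏ j, w j ^ α.1 j with hp_def
  have hp : AnalyticOnNhd ℝ p Set.univ := by
    apply Finset.analyticOnNhd_fun_sum
    intro α _
    exact (analyticOnNhd_const).mul (Finset.analyticOnNhd_fun_prod _ fun j _ =>
      ((ContinuousLinearMap.proj j :
        (Fin d → ℝ) →L[ℝ] ℝ).analyticOnNhd _).pow _)
  obtain ⟨w₀, hw₀⟩ := hne
  have hev : p =ᶠ[nhds w₀] 0 := Filter.eventually_of_mem (hU.mem_nhds hw₀) hz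
  have hall : Set.EqOn p 0 Set.univ :=
    hp.eqOn_zero_of_preconnected_of_eventuallyEq_zero isPreconnected_univ
      (Set.mem_univ w₀) hev
  let P : MvPolynomial (Fin d) ℝ := ∑ α : {α : Fin d → ℕ // ∑ j, α j ≤ m},
    MvPolynomial.monomial (Finsupp.equivFunOnFinite.symm α.1) (v α)
  have hPe : ∀ x, MvPolynomial.eval x P = p x := by
    intro x
    simp only [P, map_sum, MvPolynomial.eval_monomial, hp_def]
    refine Finset.sum_congr rfl fun α _ => ?_
    congr 1
    rw [Finsupp.prod_fintype _ _ (fun i => pow_zero _)]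
    simp
  have hP0 : P = 0 := MvPolynomial.funext fun x => by
    simp [hPe x, hall (Set.mem_univ x)]
  funext β
  have hc := congrArg (MvPolynomial.coeff (Finsupp.equivFunOnFinite.symm β.1)) hP0
  simp only [P, MvPolynomial.coeff_sum, MvPolynomial.coeff_monomial,
    MvPolynomial.coeff_zero] at hc
  have heq : ∀ α : {α : Fin d → ℕ // ∑ j, α j ≤ m},
      (Finsupp.equivFunOnFinite.symm α.1 = Finsupp.equivFunOnFinite.symm β.1) ↔ α = β := by
    intro α
    constructor
    · intro h
      exact Subtype.ext (Finsupp.equivFunOnFinite.symm.injective h)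
    · rintro rfl; rfl
  simp_rw [heq] at hc
  rw [Finset.sum_ite_eq' Finset.univ β v] at hc
  simpa using hc

/-- under the simple-domain assumption `hΔ₀ ⊆ V(h)` for `0 < h ≤ ρ`
(with `Δ₀ ⊆ [−1,1]^d` open and nonempty), for each degree `m` there exists
`λ⋆(m) > 0` such that for all `0 < h ≤ ρ` the smallest eigenvalue (expressed via
the Rayleigh quotient over unit vectors) of the Gram matrix
`B_γ = ∫_{V(h)} Φ_γ(u)Φ_γ(u)ᵀ h^{−d} du`, `Φ_γ(u) = (φ_α(u/h))_{|α|≤m}`,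
is at least `λ⋆(m)`. -/
theorem gram_min_eigenvalue_lower_bound (d : ℕ) (Dom : Set (Fin d → ℝ))
    (hDom : IsClosed Dom) (t : Fin d → ℝ)
    (ρ : ℝ) (hρ0 : 0 < ρ) (hρe : ρ ≤ Real.exp (-1))
    (Δ₀ : Set (Fin d → ℝ)) (hΔ₀open : IsOpen Δ₀) (hΔ₀ne : Δ₀.Nonempty)
    (hΔ₀sub : Δ₀ ⊆ {u : Fin d → ℝ | ‖u‖ ≤ 1})
    (hass : ∀ h : ℝ, 0 < h → h ≤ ρ →
      (fun u : Fin d → ℝ => h • u) '' Δ₀ ⊆ {u : Fin d → ℝ | t + u ∈ Dom ∧ ‖u‖ ≤ h})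
    (m : ℕ) [Fintype {α : Fin d → ℕ // ∑ j, α j ≤ m}] :
    ∃ lamStar : ℝ, 0 < lamStar ∧
      ∀ h : ℝ, 0 < h → h ≤ ρ →
        ∀ v : {α : Fin d → ℕ // ∑ j, α j ≤ m} → ℝ, v ⬝ᵥ v = 1 →
          lamStar ≤ v ⬝ᵥ Matrix.mulVec
            (Matrix.of fun α β : {α : Fin d → ℕ // ∑ j, α j ≤ m} =>
              ∫ u in {u : Fin d → ℝ | t + u ∈ Dom ∧ ‖u‖ ≤ h},
                (∏ j, (u j / h) ^ α.1 j) * (∏ j, (u j / h) ^ β.1 j) * (h ^ d)⁻¹) v := by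
  classical
  haveI : Nonempty {α : Fin d → ℕ // ∑ j, α j ≤ m} := ⟨⟨fun _ => 0, by simp⟩⟩
  -- basic facts about Δ₀
  have hΔms : MeasurableSet Δ₀ := hΔ₀open.measurableSet
  have hΔsub' : Δ₀ ⊆ Metric.closedBall 0 1 := fun w hw => by
    simpa [Metric.mem_closedBall, dist_zero_right] using hΔ₀sub hw
  have hΔfin : volume Δ₀ ≠ ⊤ :=
    ((measure_mono hΔsub').trans_lt measure_closedBall_lt_top).ne
  have hmono_cont : ∀ α : {α : Fin d → ℕ // ∑ j, α j ≤ m},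
      Continuous fun w : Fin d → ℝ => ∏ j, w j ^ α.1 j :=
    fun α => continuous_finset_prod _ fun j _ => (continuous_apply j).pow _
  have habs1 : ∀ w ∈ Δ₀, ∀ j, |w j| ≤ 1 := by
    intro w hw j
    have := norm_le_pi_norm w j
    rw [Real.norm_eq_abs] at this
    exact this.trans (hΔ₀sub hw)
  have hintΔ : ∀ α β : {α : Fin d → ℕ // ∑ j, α j ≤ m}, IntegrableOn
      (fun w => (∏ j, w j ^ α.1 j) * (∏ j, w j ^ β.1 j) * (1:ℝ)) Δ₀ := by
    intro α β
    refine intOn_bdd hΔms hΔfin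
      (((hmono_cont α).mul (hmono_cont β)).mul continuous_const) (C := 1) ?_
    intro w hw
    rw [mul_one, abs_mul]
    exact mul_le_one₀ (mono_bdd _ _ (habs1 w hw)) (abs_nonneg _)
      (mono_bdd _ _ (habs1 w hw))
  -- the limiting quadratic form
  set Cmat : Matrix {α : Fin d → ℕ // ∑ j, α j ≤ m} {α : Fin d → ℕ // ∑ j, α j ≤ m} ℝ :=
    Matrix.of fun α β => ∫ w in Δ₀, (∏ j, w j ^ α.1 j) * (∏ j, w j ^ β.1 j) * (1:ℝ)
    with hCmat
  set F : ({α : Fin d → ℕ // ∑ j, α j ≤ m} → ℝ) → ℝ :=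
    fun v => v ⬝ᵥ Cmat.mulVec v with hF
  have hFq : ∀ v, F v = ∫ w in Δ₀,
      (∑ α : {α : Fin d → ℕ // ∑ j, α j ≤ m}, v α * ∏ j, w j ^ α.1 j)^2 * 1 :=
    fun v => quad_expand Δ₀ _ 1 hintΔ v
  have hFcont : Continuous F := by
    have : F = fun v => ∑ α, v α * ∑ β, Cmat α β * v β := by
      funext v; simp [hF, dotProduct, mulVec]
    rw [this]
    exact continuous_finset_sum _ fun α _ => (continuous_apply α).mul
      (continuous_finset_sum _ fun β _ => continuous_const.mul (continuous_apply β))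
  -- the unit sphere
  set S : Set ({α : Fin d → ℕ // ∑ j, α j ≤ m} → ℝ) := {v | v ⬝ᵥ v = 1} with hS
  have hdotcont : Continuous fun v : {α : Fin d → ℕ // ∑ j, α j ≤ m} → ℝ => v ⬝ᵥ v :=
    continuous_finset_sum _ fun i _ => (continuous_apply i).mul (continuous_apply i)
  have hSclosed : IsClosed S := isClosed_eq hdotcont continuous_const
  have hSsub : S ⊆ Metric.closedBall 0 1 := by
    intro v hv
    rw [Metric.mem_closedBall, dist_zero_right,
      pi_norm_le_iff_of_nonneg zero_le_one]
    intro i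
    rw [Real.norm_eq_abs, ← sq_le_one_iff_abs_le_one]
    have h1 : v i * v i ≤ ∑ j, v j * v j :=
      Finset.single_le_sum (fun j _ => mul_self_nonneg (v j)) (Finset.mem_univ i)
    have h2 : (∑ j, v j * v j) = 1 := hv
    rw [sq]; linarith
  have hScompact : IsCompact S := Metric.isCompact_iff_isClosed_bounded.mpr
    ⟨hSclosed, Metric.isBounded_closedBall.subset hSsub⟩
  have hSne : S.Nonempty := by
    obtain ⟨i0⟩ := ‹Nonempty {α : Fin d → ℕ // ∑ j, α j ≤ m}›
    refine ⟨fun i => if i = i0 then 1 else 0, ?_⟩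
    simp only [hS, Set.mem_setOf_eq, dotProduct, ite_mul, one_mul, zero_mul]
    rw [Finset.sum_ite_eq' Finset.univ i0 fun i => if i = i0 then (1:ℝ) else 0]
    simp
  obtain ⟨v₀, hv₀S, hmin⟩ := hScompact.exists_isMinOn hSne hFcont.continuousOn
  have hv₀unit : v₀ ⬝ᵥ v₀ = 1 := hv₀S
  -- positivity of the minimum
  have hnonneg : 0 ≤ F v₀ := by
    rw [hFq]; exact setIntegral_nonneg hΔms fun w _ => by positivity
  have hpos : 0 < F v₀ := by
    rcases hnonneg.lt_or_eq with hlt | heq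
    · exact hlt
    exfalso
    set p₀ : (Fin d → ℝ) → ℝ :=
      fun w => ∑ α : {α : Fin d → ℕ // ∑ j, α j ≤ m}, v₀ α * ∏ j, w j ^ α.1 j with hp₀
    have hp₀cont : Continuous p₀ :=
      continuous_finset_sum _ fun α _ => continuous_const.mul (hmono_cont α)
    have hzero : ∀ w ∈ Δ₀, p₀ w = 0 := by
      by_contra hcon
      push_neg at hcon
      obtain ⟨w₁, hw₁Δ, hw₁⟩ := hcon
      have hnn : 0 ≤ᵐ[volume.restrict Δ₀] fun w => p₀ w ^ 2 * 1 :=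
        Filter.Eventually.of_forall fun w => by positivity
      have hbd : ∀ w ∈ Δ₀, |p₀ w ^ 2 * 1| ≤ (∑ α, |v₀ α|) ^ 2 := by
        intro w hw
        rw [mul_one, abs_pow, ← abs_pow]
        rw [abs_pow]
        refine pow_le_pow_left₀ (abs_nonneg _) ?_ 2
        refine (Finset.abs_sum_le_sum_abs _ _).trans (Finset.sum_le_sum fun α _ => ?_)
        rw [abs_mul]
        exact mul_le_of_le_one_right (abs_nonneg _) (mono_bdd _ _ (habs1 w hw))
      have hint : IntegrableOn (fun w => p₀ w ^ 2 * 1) Δ₀ :=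
        intOn_bdd hΔms hΔfin ((hp₀cont.pow 2).mul continuous_const) hbd
      have hopen : IsOpen ({w | p₀ w ≠ 0} ∩ Δ₀) :=
        (isOpen_compl_singleton.preimage hp₀cont).inter hΔ₀open
      have hsubsupp : {w | p₀ w ≠ 0} ∩ Δ₀ ⊆
          Function.support (fun w => p₀ w ^ 2 * 1) ∩ Δ₀ := by
        rintro w ⟨hw1, hw2⟩
        exact ⟨by simpa [Function.mem_support] using pow_ne_zero 2 hw1, hw2⟩
      have hposmeas : 0 < volume (Function.support (fun w => p₀ w ^ 2 * 1) ∩ Δ₀) :=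
        lt_of_lt_of_le (hopen.measure_pos volume ⟨w₁, hw₁, hw₁Δ⟩) (measure_mono hsubsupp)
      have hposint := (setIntegral_pos_iff_support_of_nonneg_ae hnn hint).2 hposmeas
      rw [hFq v₀] at heq
      exact hposint.ne' heq.symm
    have hv₀0 := coeffs_zero v₀ hΔ₀open hΔ₀ne hzero
    rw [hv₀0] at hv₀unit
    simp [dotProduct] at hv₀unit
  -- the bound for each h
  refine ⟨F v₀, hpos, ?_⟩
  intro h hh0 hhρ v hv
  set V : Set (Fin d → ℝ) := {u | t + u ∈ Dom ∧ ‖u‖ ≤ h} with hV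
  have hVclosed : IsClosed V := by
    have : V = ((fun u => t + u) ⁻¹' Dom) ∩ {u | ‖u‖ ≤ h} := rfl
    rw [this]
    exact (hDom.preimage (continuous_const.add continuous_id)).inter
      (isClosed_le continuous_norm continuous_const)
  have hVms : MeasurableSet V := hVclosed.measurableSet
  have hVsub : V ⊆ Metric.closedBall 0 h := fun u hu => by
    simpa [Metric.mem_closedBall, dist_zero_right] using hu.2
  have hVfin : volume V ≠ ⊤ :=
    ((measure_mono hVsub).trans_lt measure_closedBall_lt_top).ne
  have habsh : ∀ u ∈ V, ∀ j, |u j / h| ≤ 1 := by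
    intro u hu j
    rw [abs_div, abs_of_pos hh0, div_le_one hh0]
    have := norm_le_pi_norm u j
    rw [Real.norm_eq_abs] at this
    exact this.trans hu.2
  have hfc : ∀ α : {α : Fin d → ℕ // ∑ j, α j ≤ m},
      Continuous fun u : Fin d → ℝ => ∏ j, (u j / h) ^ α.1 j :=
    fun α => continuous_finset_prod _ fun j _ => (by fun_prop)
  have hcd : (0:ℝ) < (h ^ d)⁻¹ := by positivity
  have hintV : ∀ α β : {α : Fin d → ℕ // ∑ j, α j ≤ m}, IntegrableOn
      (fun u => (∏ j, (u j / h) ^ α.1 j) * (∏ j, (u j / h) ^ β.1 j) * (h ^ d)⁻¹) V := by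
    intro α β
    refine intOn_bdd hVms hVfin (((hfc α).mul (hfc β)).mul continuous_const)
      (C := (h ^ d)⁻¹) ?_
    intro u hu
    rw [abs_mul, abs_mul, abs_of_pos hcd]
    calc |∏ j, (u j / h) ^ α.1 j| * |∏ j, (u j / h) ^ β.1 j| * (h ^ d)⁻¹
        ≤ 1 * 1 * (h ^ d)⁻¹ := by
          gcongr
          · exact mono_bdd _ _ (habsh u hu)
          · exact mono_bdd _ _ (habsh u hu)
      _ = (h ^ d)⁻¹ := by ring
  rw [quad_expand V _ _ hintV v]
  -- restrict to h • Δ₀ and change variables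
  have hsub : (h • Δ₀ : Set (Fin d → ℝ)) ⊆ V := by
    intro u hu
    exact hass h hh0 hhρ hu
  have hintF : IntegrableOn (fun u =>
      (∑ α : {α : Fin d → ℕ // ∑ j, α j ≤ m}, v α * ∏ j, (u j / h) ^ α.1 j) ^ 2
        * (h ^ d)⁻¹) V := by
    refine intOn_bdd hVms hVfin ((continuous_finset_sum _ fun α _ =>
      continuous_const.mul (hfc α)).pow 2 |>.mul continuous_const)
      (C := (∑ α, |v α|) ^ 2 * (h ^ d)⁻¹) ?_
    intro u hu
    rw [abs_mul, abs_of_pos hcd, abs_pow]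
    gcongr
    refine (Finset.abs_sum_le_sum_abs _ _).trans (Finset.sum_le_sum fun α _ => ?_)
    rw [abs_mul]
    exact mul_le_of_le_one_right (abs_nonneg _) (mono_bdd _ _ (habsh u hu))
  have step1 : ∫ u in h • Δ₀,
      (∑ α : {α : Fin d → ℕ // ∑ j, α j ≤ m}, v α * ∏ j, (u j / h) ^ α.1 j) ^ 2
        * (h ^ d)⁻¹
      ≤ ∫ u in V, (∑ α : {α : Fin d → ℕ // ∑ j, α j ≤ m},
          v α * ∏ j, (u j / h) ^ α.1 j) ^ 2 * (h ^ d)⁻¹ :=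
    setIntegral_mono_set hintF
      (Filter.Eventually.of_forall fun u => by positivity)
      (HasSubset.Subset.eventuallyLE hsub)
  have hDd : Module.finrank ℝ (Fin d → ℝ) = d := Module.finrank_fin_fun ℝ
  have key : ∫ u in h • Δ₀,
      (∑ α : {α : Fin d → ℕ // ∑ j, α j ≤ m}, v α * ∏ j, (u j / h) ^ α.1 j) ^ 2
        * (h ^ d)⁻¹ = F v := by
    have hcv := MeasureTheory.Measure.setIntegral_comp_smul_of_pos volume
      (fun u : Fin d → ℝ =>
        (∑ α : {α : Fin d → ℕ // ∑ j, α j ≤ m}, v α * ∏ j, (u j / h) ^ α.1 j) ^ 2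
          * (h ^ d)⁻¹) Δ₀ hh0
    rw [hDd] at hcv
    have hsimp : ∀ x : Fin d → ℝ,
        (∑ α : {α : Fin d → ℕ // ∑ j, α j ≤ m}, v α * ∏ j, ((h • x) j / h) ^ α.1 j) ^ 2
          * (h ^ d)⁻¹
        = (∑ α : {α : Fin d → ℕ // ∑ j, α j ≤ m}, v α * ∏ j, x j ^ α.1 j) ^ 2
          * (h ^ d)⁻¹ := by
      intro x
      congr 2
      refine Finset.sum_congr rfl fun α _ => ?_
      congr 1
      refine Finset.prod_congr rfl fun j _ => ?_
      congr 1
      simp [Pi.smul_apply, smul_eq_mul]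
      field_simp
    simp only [hsimp] at hcv
    have hhd : (h:ℝ) ^ d ≠ 0 := by positivity
    rw [hFq v]
    have := hcv.symm
    rw [smul_eq_mul] at this
    -- this : (h^d)⁻¹ * ∫ u in h•Δ₀, ... = ∫ x in Δ₀, (∑ ...)^2 * (h^d)⁻¹
    have h2 : ∫ x in Δ₀, (∑ α : {α : Fin d → ℕ // ∑ j, α j ≤ m},
        v α * ∏ j, x j ^ α.1 j) ^ 2 * (h ^ d)⁻¹
        = (h ^ d)⁻¹ * ∫ x in Δ₀, (∑ α : {α : Fin d → ℕ // ∑ j, α j ≤ m},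
            v α * ∏ j, x j ^ α.1 j) ^ 2 * 1 := by
      rw [← integral_const_mul]
      refine integral_congr_ae (Filter.Eventually.of_forall fun x => ?_)
      ring
    rw [h2] at this
    exact mul_left_cancel₀ (inv_ne_zero hhd) this
  calc F v₀ ≤ F v := hmin hv
    _ = _ := key.symm
    _ ≤ _ := step1
end

section
/- For the polynomial sector D_k with k > 1, fix m ∈ ℕ and let B_γ(h) denote the Gram matrix with entries c_k(α,β) h^{(k−1)(α₂+β₂+1)} over multi-indices |α|,|β| ≤ m (with c_k(α,β) = [(α₂+β₂+1)(α₁+β₁+k(α₂+β₂+1)+1)]^{−1}). Then there exists Ψ⋆ > 0 (depending on k and m but not on h) such that the smallest eigenvalue of B_γ(h) satisfies λ_γ(h) ≥ Ψ⋆ h^{(k−1)(2m+1)} for all h ∈ (0,1]. -/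
set_option maxHeartbeats 1000000
open MeasureTheory intervalIntegral Set Finset Polynomial Matrix

lemma sq_poly_integral_pos (p : Polynomial ℝ) (hp : p ≠ 0) :
    0 < ∫ x in (0:ℝ)..1, (p.eval x)^2 := by
  have hcont : Continuous fun x : ℝ => (p.eval x)^2 := p.continuous.pow 2
  rw [intervalIntegral.integral_pos_iff_support_of_nonneg_ae
    (Filter.Eventually.of_forall fun x => sq_nonneg _)
    (hcont.intervalIntegrable 0 1)]
  refine ⟨one_pos, ?_⟩
  have hroots : {x : ℝ | p.IsRoot x}.Finite := Polynomial.finite_setOf_isRoot hp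
  have hsub : Ioc (0:ℝ) 1 \ {x : ℝ | p.IsRoot x} ⊆
      Function.support (fun x : ℝ => (p.eval x)^2) ∩ Ioc 0 1 := by
    rintro x ⟨hx1, hx2⟩
    exact ⟨pow_ne_zero _ hx2, hx1⟩
  calc (0:ENNReal) < volume (Ioc (0:ℝ) 1 \ {x : ℝ | p.IsRoot x}) := by
        rw [measure_diff_null (hroots.measure_zero _), Real.volume_Ioc]
        simp
    _ ≤ _ := measure_mono hsub

-- generic monomial-sum square integral
lemma integral_sq_monomial_sum {ι : Type*} [Fintype ι] (a : ι → ℝ) (n : ι → ℕ) :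
    ∫ x in (0:ℝ)..1, (∑ α, a α * x ^ n α)^2
      = ∑ α, ∑ β, a α * a β * ((n α + n β : ℕ) + 1 : ℝ)⁻¹ := by
  have hpt : ∀ x : ℝ, (∑ α, a α * x ^ n α)^2
      = ∑ α, ∑ β, (a α * a β) * x ^ (n α + n β) := by
    intro x
    rw [sq, Finset.sum_mul_sum]
    refine Finset.sum_congr rfl fun α _ => Finset.sum_congr rfl fun β _ => ?_
    rw [pow_add]; ring
  simp only [hpt]
  rw [intervalIntegral.integral_finset_sum]
  · refine Finset.sum_congr rfl fun α _ => ?_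
    rw [intervalIntegral.integral_finset_sum]
    · refine Finset.sum_congr rfl fun β _ => ?_
      rw [intervalIntegral.integral_const_mul, integral_pow]
      push_cast
      ring
    · intro β _
      exact ((continuous_const.mul (continuous_pow _)).intervalIntegrable 0 1)
  · intro α _
    exact ((continuous_finset_sum _ fun β _ =>
      (continuous_const.mul (continuous_pow _))).intervalIntegrable 0 1)

-- generic rpow-sum integral
lemma integral_rpow_sum {ι : Type*} [Fintype ι] (c : ι → ℝ) (e : ι → ℝ)
    (he : ∀ α, 0 ≤ e α) :
    ∫ y in (0:ℝ)..1, (∑ α, c α * y ^ (e α))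
      = ∑ α, c α * (e α + 1)⁻¹ := by
  rw [intervalIntegral.integral_finset_sum]
  · refine Finset.sum_congr rfl fun α _ => ?_
    rw [intervalIntegral.integral_const_mul, integral_rpow (Or.inl (by linarith [he α]))]
    rw [Real.one_rpow, Real.zero_rpow (by linarith [he α])]
    field_simp
    ring
  · intro α _
    exact (intervalIntegrable_rpow' (by linarith [he α])).const_mul _

abbrev Idx (m : ℕ) := {α : ℕ × ℕ // α.1 + α.2 ≤ m}

noncomputable def rr (k : ℝ) {m : ℕ} (α : Idx m) : ℝ := α.1.1 + k * α.1.2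

noncomputable def Ppoly {m : ℕ} [Fintype (Idx m)] (v : Idx m → ℝ) (j : ℕ) : Polynomial ℝ :=
  ∑ α ∈ Finset.univ.filter (fun α : Idx m => α.1.2 = j), Polynomial.C (v α) * X ^ (α.1.1)

lemma Ppoly_exists_ne_zero {m : ℕ} [Fintype (Idx m)] (v : Idx m → ℝ) (hv : v ≠ 0) :
    ∃ j, Ppoly v j ≠ 0 := by
  obtain ⟨α₀, hα₀⟩ := Function.ne_iff.mp hv
  refine ⟨α₀.1.2, fun hzero => hα₀ ?_⟩
  have hc : (Ppoly v α₀.1.2).coeff α₀.1.1 = v α₀ := by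
    rw [Ppoly, Polynomial.finset_sum_coeff]
    rw [Finset.sum_eq_single α₀]
    · simp
    · intro α hα hne
      simp only [Finset.mem_filter] at hα
      rw [Polynomial.coeff_C_mul, Polynomial.coeff_X_pow]
      have : α₀.1.1 ≠ α.1.1 := by
        intro h
        exact hne (Subtype.ext (Prod.ext h.symm hα.2))
      simp [this]
    · intro h
      simp at h
  rw [hzero] at hc
  simpa using hc.symm

noncomputable def qpoly (k : ℝ) {m : ℕ} [Fintype (Idx m)] (v : Idx m → ℝ) (y : ℝ) :
    Polynomial ℝ :=
  ∑ α : Idx m, Polynomial.C (v α * y ^ rr k α) * X ^ (α.1.2)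

lemma qpoly_coeff (k : ℝ) {m : ℕ} [Fintype (Idx m)] (v : Idx m → ℝ) (y : ℝ) (j : ℕ) :
    (qpoly k v y).coeff j
      = ∑ α ∈ Finset.univ.filter (fun α : Idx m => α.1.2 = j), v α * y ^ rr k α := by
  rw [qpoly, Polynomial.finset_sum_coeff]
  rw [Finset.sum_filter]
  refine Finset.sum_congr rfl fun α _ => ?_
  rw [Polynomial.coeff_C_mul, Polynomial.coeff_X_pow]
  by_cases h : α.1.2 = j
  · simp [h]
  · rw [if_neg h, if_neg (fun hh => h hh.symm), mul_zero]

lemma qpoly_ne_zero (k : ℝ) {m : ℕ} [Fintype (Idx m)] (v : Idx m → ℝ) {y : ℝ}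
    (hy : 0 < y) {j : ℕ} (hroot : (Ppoly v j).eval y ≠ 0) : qpoly k v y ≠ 0 := by
  intro hzero
  apply hroot
  have hc : (qpoly k v y).coeff j = (Ppoly v j).eval y * y ^ (k * j) := by
    rw [qpoly_coeff, Ppoly, Polynomial.eval_finset_sum, Finset.sum_mul]
    refine Finset.sum_congr rfl fun α hα => ?_
    simp only [Finset.mem_filter] at hα
    rw [Polynomial.eval_mul, Polynomial.eval_C, Polynomial.eval_pow, Polynomial.eval_X]
    rw [rr, hα.2, Real.rpow_add hy, mul_assoc, Real.rpow_natCast]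
  rw [hzero] at hc
  simp only [Polynomial.coeff_zero] at hc
  have := (Real.rpow_pos_of_pos hy (k * j)).ne'
  rcases mul_eq_zero.mp hc.symm with h | h
  · exact h
  · exact absurd h this

noncomputable def Cmat (k : ℝ) (m : ℕ) [Fintype (Idx m)] : Matrix (Idx m) (Idx m) ℝ :=
  Matrix.of fun α β : Idx m =>
    (((α.1.2 : ℝ) + β.1.2 + 1) *
      ((α.1.1 : ℝ) + β.1.1 + k * ((α.1.2 : ℝ) + β.1.2 + 1) + 1))⁻¹

lemma rr_nonneg {k : ℝ} (hk : 0 ≤ k) {m : ℕ} (α : Idx m) : 0 ≤ rr k α := by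
  rw [rr]; positivity

lemma Cmat_quadform (k : ℝ) (hk : 0 ≤ k) {m : ℕ} [Fintype (Idx m)] (v : Idx m → ℝ) :
    v ⬝ᵥ (Cmat k m).mulVec v
      = ∫ y in (0:ℝ)..1, ∑ p : Idx m × Idx m,
          (v p.1 * v p.2 * ((p.1.1.2 + p.2.1.2 : ℕ) + 1 : ℝ)⁻¹)
            * y ^ (k + rr k p.1 + rr k p.2) := by
  rw [integral_rpow_sum _ _ (fun p => by
    have := rr_nonneg hk p.1; have := rr_nonneg hk p.2; linarith)]
  simp only [dotProduct, Matrix.mulVec, Cmat, Matrix.of_apply, Fintype.sum_prod_type,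
    Finset.mul_sum]
  refine Finset.sum_congr rfl fun α _ => Finset.sum_congr rfl fun β _ => ?_
  rw [mul_inv]
  have h1 : ((α.1.2 + β.1.2 : ℕ) + 1 : ℝ) = (α.1.2 : ℝ) + β.1.2 + 1 := by push_cast; ring
  have h2 : k + rr k α + rr k β + 1
      = (α.1.1 : ℝ) + β.1.1 + k * ((α.1.2 : ℝ) + β.1.2 + 1) + 1 := by
    rw [rr, rr]; ring
  rw [h1, h2]; ring

lemma Cmat_pd (k : ℝ) (hk : 1 < k) {m : ℕ} [Fintype (Idx m)] (v : Idx m → ℝ) (hv : v ≠ 0) :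
    0 < v ⬝ᵥ (Cmat k m).mulVec v := by
  have hk0 : (0:ℝ) ≤ k := by linarith
  rw [Cmat_quadform k hk0 v]
  obtain ⟨j₀, hj₀⟩ := Ppoly_exists_ne_zero v hv
  set F : ℝ → ℝ := fun y => ∑ p : Idx m × Idx m,
      (v p.1 * v p.2 * ((p.1.1.2 + p.2.1.2 : ℕ) + 1 : ℝ)⁻¹)
        * y ^ (k + rr k p.1 + rr k p.2) with hF
  have key : ∀ y : ℝ, 0 < y → F y
      = y ^ k * ∫ x in (0:ℝ)..1,
          (∑ α : Idx m, (v α * y ^ rr k α) * x ^ (α.1.2))^2 := by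
    intro y hy
    rw [integral_sq_monomial_sum (fun α => v α * y ^ rr k α) (fun α => α.1.2)]
    simp only [hF, Fintype.sum_prod_type, Finset.mul_sum]
    refine Finset.sum_congr rfl fun α _ => Finset.sum_congr rfl fun β _ => ?_
    rw [Real.rpow_add hy, Real.rpow_add hy]
    ring
  have hnonneg : ∀ y ∈ Ioc (0:ℝ) 1, 0 ≤ F y := by
    intro y hy
    rw [key y hy.1]
    exact mul_nonneg (Real.rpow_nonneg hy.1.le _)
      (intervalIntegral.integral_nonneg zero_le_one fun x _ => sq_nonneg _)
  have hpos : ∀ y : ℝ, y ∈ Ioc (0:ℝ) 1 \ {x : ℝ | (Ppoly v j₀).IsRoot x} → 0 < F y := by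
    rintro y ⟨hy, hyr⟩
    rw [key y hy.1]
    refine mul_pos (Real.rpow_pos_of_pos hy.1 _) ?_
    have hq : qpoly k v y ≠ 0 := qpoly_ne_zero k v hy.1 (j := j₀) hyr
    have hval := sq_poly_integral_pos (qpoly k v y) hq
    have hintegrand : (fun x : ℝ => (∑ α : Idx m, (v α * y ^ rr k α) * x ^ (α.1.2))^2)
        = fun x : ℝ => ((qpoly k v y).eval x)^2 := by
      funext x
      simp [qpoly, Polynomial.eval_finset_sum]
    rw [hintegrand]
    exact hval
  have hint : IntervalIntegrable F volume 0 1 := by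
    have h := IntervalIntegrable.sum (μ := volume) (a := (0:ℝ)) (b := (1:ℝ))
      (f := fun (p : Idx m × Idx m) (y : ℝ) =>
        (v p.1 * v p.2 * ((p.1.1.2 + p.2.1.2 : ℕ) + 1 : ℝ)⁻¹)
          * y ^ (k + rr k p.1 + rr k p.2)) Finset.univ
      (fun p _ => by
        refine (intervalIntegrable_rpow' ?_).const_mul _
        have := rr_nonneg hk0 p.1; have := rr_nonneg hk0 p.2; linarith)
    have e : F = ∑ p : Idx m × Idx m, fun y : ℝ =>
        (v p.1 * v p.2 * ((p.1.1.2 + p.2.1.2 : ℕ) + 1 : ℝ)⁻¹)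
          * y ^ (k + rr k p.1 + rr k p.2) := by
      funext y
      rw [Finset.sum_apply, hF]
    rw [e]
    exact h
  rw [intervalIntegral.integral_pos_iff_support_of_nonneg_ae' ?h1 hint]
  case h1 =>
    filter_upwards [ae_restrict_mem measurableSet_uIoc] with y hy
    exact hnonneg y (by rwa [uIoc_of_le zero_le_one] at hy)
  refine ⟨one_pos, ?_⟩
  have hroots : {x : ℝ | (Ppoly v j₀).IsRoot x}.Finite := Polynomial.finite_setOf_isRoot hj₀
  have hsub : Ioc (0:ℝ) 1 \ {x : ℝ | (Ppoly v j₀).IsRoot x}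
      ⊆ Function.support F ∩ Ioc 0 1 := by
    rintro y ⟨hy1, hy2⟩
    exact ⟨(hpos y ⟨hy1, hy2⟩).ne', hy1⟩
  calc (0:ENNReal) < volume (Ioc (0:ℝ) 1 \ {x : ℝ | (Ppoly v j₀).IsRoot x}) := by
        rw [measure_diff_null (hroots.measure_zero _), Real.volume_Ioc]
        simp
    _ ≤ _ := measure_mono hsub

lemma quadform_lower_bound (m : ℕ) [Fintype (Idx m)] (C : Matrix (Idx m) (Idx m) ℝ)
    (hpd : ∀ v : Idx m → ℝ, v ≠ 0 → 0 < v ⬝ᵥ C.mulVec v) :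
    ∃ Ψ : ℝ, 0 < Ψ ∧ ∀ w : Idx m → ℝ, Ψ * (w ⬝ᵥ w) ≤ w ⬝ᵥ C.mulVec w := by
  set φ : (Idx m → ℝ) → ℝ := fun w => w ⬝ᵥ C.mulVec w with hφ
  have hφcont : Continuous φ := by
    simp only [hφ, dotProduct, Matrix.mulVec]
    exact continuous_finset_sum _ fun α _ => (continuous_apply α).mul
      (continuous_finset_sum _ fun β _ => (continuous_const.mul (continuous_apply β)))
  have hdcont : Continuous fun w : Idx m → ℝ => w ⬝ᵥ w := by
    simp only [dotProduct]
    exact continuous_finset_sum _ fun α _ => (continuous_apply α).mul (continuous_apply α)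
  set K : Set (Idx m → ℝ) := {w | w ⬝ᵥ w = 1} with hK
  have hKclosed : IsClosed K := isClosed_eq hdcont continuous_const
  have hKbdd : Bornology.IsBounded K := by
    refine (Metric.isBounded_closedBall (x := (0 : Idx m → ℝ)) (r := 1)).subset ?_
    intro w hw
    simp only [Metric.mem_closedBall, dist_zero_right]
    rw [pi_norm_le_iff_of_nonneg zero_le_one]
    intro i
    rw [Real.norm_eq_abs, abs_le_one_iff_mul_self_le_one]
    calc w i * w i ≤ ∑ j, w j * w j :=
          Finset.single_le_sum (fun j _ => mul_self_nonneg (w j)) (Finset.mem_univ i)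
      _ = 1 := hw
  have hKcompact : IsCompact K := Metric.isCompact_of_isClosed_isBounded hKclosed hKbdd
  have hKne : K.Nonempty := by
    refine ⟨Pi.single ⟨(0,0), by simp⟩ 1, ?_⟩
    simp [hK, dotProduct_single, Pi.single_eq_same]
  obtain ⟨w₀, hw₀K, hmin⟩ := hKcompact.exists_isMinOn hKne hφcont.continuousOn
  have hw₀ne : w₀ ≠ 0 := by
    intro h
    rw [hK] at hw₀K
    simp only [Set.mem_setOf_eq, h] at hw₀K
    simp [zero_dotProduct] at hw₀K
  refine ⟨φ w₀, hpd w₀ hw₀ne, fun w => ?_⟩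
  by_cases hw : w = 0
  · subst hw
    simp [hφ, zero_dotProduct]
  · have hs0 : w ⬝ᵥ w ≠ 0 := fun h => hw (dotProduct_self_eq_zero.mp h)
    have hsnn : 0 ≤ w ⬝ᵥ w := Finset.sum_nonneg fun i _ => mul_self_nonneg (w i)
    have hs : 0 < w ⬝ᵥ w := lt_of_le_of_ne hsnn (Ne.symm hs0)
    have hsq : 0 < Real.sqrt (w ⬝ᵥ w) := Real.sqrt_pos.mpr hs
    have hu : ((Real.sqrt (w ⬝ᵥ w))⁻¹ • w) ∈ K := by
      rw [hK]
      simp only [Set.mem_setOf_eq, smul_dotProduct, dotProduct_smul,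
        smul_eq_mul]
      rw [← mul_assoc, ← mul_inv, Real.mul_self_sqrt hsnn]
      exact inv_mul_cancel₀ hs0
    have hφu : φ ((Real.sqrt (w ⬝ᵥ w))⁻¹ • w) = (w ⬝ᵥ w)⁻¹ * φ w := by
      simp only [hφ, smul_dotProduct, Matrix.mulVec_smul, dotProduct_smul,
        smul_eq_mul]
      rw [← mul_assoc, ← mul_inv, Real.mul_self_sqrt hsnn]
    have hle : φ w₀ ≤ (w ⬝ᵥ w)⁻¹ * φ w := hφu ▸ isMinOn_iff.mp hmin _ hu
    have := mul_le_mul_of_nonneg_right hle hsnn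
    calc φ w₀ * (w ⬝ᵥ w) ≤ (w ⬝ᵥ w)⁻¹ * φ w * (w ⬝ᵥ w) := this
      _ = φ w := by field_simp

/-- for the polynomial sector `D_k`, `k > 1`, and fixed degree `m`, the
Gram matrix with entries `c_k(α,β) h^{(k−1)(α₂+β₂+1)}` over multi-indices of total
degree at most `m` has smallest eigenvalue (via the Rayleigh quotient) at least
`Ψ⋆ h^{(k−1)(2m+1)}` for all `h ∈ (0,1]`, for some `Ψ⋆ > 0` independent of `h`. -/
theorem sector_gram_min_eigenvalue (k : ℝ) (hk : 1 < k) (m : ℕ)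
    [Fintype {α : ℕ × ℕ // α.1 + α.2 ≤ m}] :
    ∃ Ψ : ℝ, 0 < Ψ ∧
      ∀ h : ℝ, 0 < h → h ≤ 1 →
        ∀ v : {α : ℕ × ℕ // α.1 + α.2 ≤ m} → ℝ, v ⬝ᵥ v = 1 →
          Ψ * h ^ ((k - 1) * (2 * (m : ℝ) + 1)) ≤
            v ⬝ᵥ Matrix.mulVec
              (Matrix.of fun α β : {α : ℕ × ℕ // α.1 + α.2 ≤ m} =>
                (((α.1.2 : ℝ) + β.1.2 + 1) *
                    ((α.1.1 : ℝ) + β.1.1 + k * ((α.1.2 : ℝ) + β.1.2 + 1) + 1))⁻¹ *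
                  h ^ ((k - 1) * ((α.1.2 : ℝ) + β.1.2 + 1))) v := by
  obtain ⟨Ψ, hΨ, hbound⟩ := quadform_lower_bound m (Cmat k m) (Cmat_pd k hk)
  refine ⟨Ψ, hΨ, ?_⟩
  intro h h0 h1 v hv
  set w : Idx m → ℝ := fun α => h ^ ((k - 1) * ((α.1.2 : ℝ) + 1/2)) * v α with hwdef
  have hee : ∀ α β : Idx m,
      h ^ ((k - 1) * ((α.1.2 : ℝ) + 1/2)) * h ^ ((k - 1) * ((β.1.2 : ℝ) + 1/2))
        = h ^ ((k - 1) * ((α.1.2 : ℝ) + β.1.2 + 1)) := by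
    intro α β
    rw [← Real.rpow_add h0]
    congr 1
    ring
  have hstep1 : v ⬝ᵥ Matrix.mulVec
      (Matrix.of fun α β : Idx m =>
        (((α.1.2 : ℝ) + β.1.2 + 1) *
            ((α.1.1 : ℝ) + β.1.1 + k * ((α.1.2 : ℝ) + β.1.2 + 1) + 1))⁻¹ *
          h ^ ((k - 1) * ((α.1.2 : ℝ) + β.1.2 + 1))) v
      = w ⬝ᵥ (Cmat k m).mulVec w := by
    simp only [dotProduct, Matrix.mulVec, Matrix.of_apply, Cmat, Finset.mul_sum,
      hwdef]
    refine Finset.sum_congr rfl fun α _ => Finset.sum_congr rfl fun β _ => ?_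
    rw [← hee α β]
    ring
  have hE : ∀ α : Idx m, h ^ ((k - 1) * (2 * (m : ℝ) + 1))
      ≤ h ^ ((k - 1) * ((α.1.2 : ℝ) + 1/2)) * h ^ ((k - 1) * ((α.1.2 : ℝ) + 1/2)) := by
    intro α
    rw [← Real.rpow_add h0]
    apply Real.rpow_le_rpow_of_exponent_ge h0 h1
    have hα : (α.1.2 : ℝ) ≤ (m : ℝ) := by
      exact_mod_cast le_trans (Nat.le_add_left _ _) α.2
    nlinarith [hα, hk]
  have hstep2 : h ^ ((k - 1) * (2 * (m : ℝ) + 1)) ≤ w ⬝ᵥ w := by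
    have : w ⬝ᵥ w = ∑ α : Idx m,
        (h ^ ((k - 1) * ((α.1.2 : ℝ) + 1/2)) * h ^ ((k - 1) * ((α.1.2 : ℝ) + 1/2)))
          * (v α * v α) := by
      simp only [dotProduct, hwdef]
      exact Finset.sum_congr rfl fun α _ => by ring
    rw [this]
    calc h ^ ((k - 1) * (2 * (m : ℝ) + 1))
        = ∑ α : Idx m, h ^ ((k - 1) * (2 * (m : ℝ) + 1)) * (v α * v α) := by
          rw [← Finset.mul_sum]
          have : ∑ α : Idx m, v α * v α = 1 := hv
          rw [this, mul_one]
      _ ≤ _ := Finset.sum_le_sum fun α _ =>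
          mul_le_mul_of_nonneg_right (hE α) (mul_self_nonneg (v α))
  calc Ψ * h ^ ((k - 1) * (2 * (m : ℝ) + 1)) ≤ Ψ * (w ⬝ᵥ w) :=
        mul_le_mul_of_nonneg_left hstep2 hΨ.le
    _ ≤ w ⬝ᵥ (Cmat k m).mulVec w := hbound w
    _ = _ := hstep1.symm
end

section
/- Let s, L > 0 and ρ ∈ (0, e^{−1}]. There exists a constant F(s,L) < ∞ such that every probability density f : D → ℝ in the Hölder class Σ(s,L) satisfies sup_{u ∈ V(ρ)} |f(t+u)| ≤ F(s,L). -/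
open MeasureTheory


lemma mvpoly_zero_set_null : ∀ (d : ℕ) (p : MvPolynomial (Fin d) ℝ), p ≠ 0 →
    volume {x : Fin d → ℝ | MvPolynomial.eval x p = 0} = 0 := by
  intro d
  induction d with
  | zero =>
    intro p hp
    obtain ⟨c, rfl⟩ := MvPolynomial.C_surjective (Fin 0) p
    have hc : c ≠ 0 := fun h => hp (by rw [h, map_zero])
    convert measure_empty
    · ext x; simpa using hc
    · infer_instance
  | succ n ih =>
    intro p hp
    set P := MvPolynomial.finSuccEquiv ℝ n p with hP
    have hPne : P ≠ 0 := by
      simp only [hP, ne_eq, EmbeddingLike.map_eq_zero_iff]; exact hp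
    set c := P.leadingCoeff with hc
    have hcne : c ≠ 0 := Polynomial.leadingCoeff_ne_zero.2 hPne
    have hB : volume {y : Fin n → ℝ | MvPolynomial.eval y c = 0} = 0 := ih c hcne
    set W : Set ((Fin n → ℝ) × ℝ) := {w | MvPolynomial.eval (Fin.cons w.2 w.1) p = 0} with hW
    have hcont : Continuous fun w : (Fin n → ℝ) × ℝ => MvPolynomial.eval (Fin.cons w.2 w.1) p := by
      apply (MvPolynomial.continuous_eval p).comp
      apply continuous_pi
      intro i
      refine Fin.cases ?_ ?_ i
      · simpa using continuous_snd
      · intro j; simpa [Function.comp_def] using (continuous_apply j).comp continuous_fst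
    have hWm : MeasurableSet W := by
      have : W = (fun w : (Fin n → ℝ) × ℝ => MvPolynomial.eval (Fin.cons w.2 w.1) p) ⁻¹' {0} := rfl
      rw [this]
      exact (isClosed_singleton.preimage hcont).measurableSet
    have hWnull : ((volume : Measure (Fin n → ℝ)).prod (volume : Measure ℝ)) W = 0 := by
      rw [MeasureTheory.Measure.measure_prod_null hWm]
      filter_upwards [measure_eq_zero_iff_ae_notMem.mp hB] with y hy
      have hy' : MvPolynomial.eval y c ≠ 0 := by simpa using hy
      have hq : Polynomial.map (MvPolynomial.eval y) P ≠ 0 := by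
        intro h
        apply hy'
        have := congrArg (fun r => Polynomial.coeff r P.natDegree) h
        simpa [Polynomial.coeff_map, hc, Polynomial.coeff_natDegree] using this
      have hpre : Prod.mk y ⁻¹' W = {a | Polynomial.IsRoot (Polynomial.map (MvPolynomial.eval y) P) a} := by
        ext a
        simp [hW, MvPolynomial.eval_eq_eval_mv_eval', Polynomial.IsRoot, hP]
      rw [hpre]
      exact Set.Finite.measure_zero (Polynomial.finite_setOf_isRoot hq) _
    have mp1 := volume_preserving_piFinSuccAbove (fun _ : Fin (n+1) => ℝ) 0
    have mp := MeasureTheory.Measure.measurePreserving_swap.comp mp1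
    have hset : {x : Fin (n+1) → ℝ | MvPolynomial.eval x p = 0} =
        (Prod.swap ∘ (MeasurableEquiv.piFinSuccAbove (fun _ : Fin (n+1) => ℝ) 0)) ⁻¹' W := by
      ext x
      have hx : (Fin.cons (x 0) (Fin.removeNth 0 x) : Fin (n+1) → ℝ) = x := by
        funext i
        refine Fin.cases rfl (fun j => by simp [Fin.removeNth, Fin.tail, Fin.zero_succAbove]) i
      simp only [Set.mem_setOf_eq, Set.mem_preimage, Function.comp_apply, hW,
        MeasurableEquiv.piFinSuccAbove_apply, Prod.swap, Fin.insertNthEquiv, Equiv.symm, Equiv.coe_fn_mk, Fin.removeNth, hx]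
    rw [hset, mp.measure_preimage hWm.nullMeasurableSet]
    exact hWnull

/-- uniform boundedness of Hölder-class densities. For `s, L > 0` and
`ρ ∈ (0, e^{−1}]`, there exists `F(s,L) < ∞` such that every probability density `f`
supported on `D` admitting on `V(ρ) = (D−t) ∩ ρ[−1,1]^d` a polynomial approximation
of degree at most `⌊s⌋'` (greatest integer strictly less than `s`) with error
`L‖u‖_∞^s` satisfies `sup_{u ∈ V(ρ)} |f(t+u)| ≤ F(s,L)`. -/
theorem holder_class_uniformly_bounded (d : ℕ) (Dom : Set (Fin d → ℝ))
    (hDom : MeasurableSet Dom) (t : Fin d → ℝ)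
    (ρ : ℝ) (hρ0 : 0 < ρ) (hρe : ρ ≤ Real.exp (-1))
    (hV : 0 < volume {u : Fin d → ℝ | t + u ∈ Dom ∧ ‖u‖ ≤ ρ})
    (s L : ℝ) (hs : 0 < s) (hL : 0 < L)
    (ms : ℕ) (hms : (ms : ℝ) < s ∧ s ≤ ms + 1)
    [Fintype {α : Fin d → ℕ // ∑ j, α j ≤ ms}] :
    ∃ F : ℝ, ∀ f : (Fin d → ℝ) → ℝ,
      Measurable f → (∀ x, 0 ≤ f x) → (∀ x, x ∉ Dom → f x = 0) → (∫ x, f x) = 1 →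
      (∃ q : {α : Fin d → ℕ // ∑ j, α j ≤ ms} → ℝ,
        ∀ u : Fin d → ℝ, t + u ∈ Dom → ‖u‖ ≤ ρ →
          |f (t + u) - ∑ α, q α * ∏ j, u j ^ α.1 j| ≤ L * ‖u‖ ^ s) →
      ∀ u : Fin d → ℝ, t + u ∈ Dom → ‖u‖ ≤ ρ → |f (t + u)| ≤ F := by
  classical
  set P : ({α : Fin d → ℕ // ∑ j, α j ≤ ms} → ℝ) → (Fin d → ℝ) → ℝ := fun q u => ∑ α, q α * ∏ j, u j ^ α.1 j with hPdef
  have hPeq : ∀ (q : {α : Fin d → ℕ // ∑ j, α j ≤ ms} → ℝ) (u : Fin d → ℝ), P q u = ∑ α, q α * ∏ j, u j ^ α.1 j :=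
    fun _ _ => rfl
  set V : Set (Fin d → ℝ) := {u | t + u ∈ Dom ∧ ‖u‖ ≤ ρ} with hVdef
  have hρ1 : ρ ≤ 1 := hρe.trans (by rw [← Real.exp_zero]; exact Real.exp_le_exp.2 (by norm_num))
  -- measurability of V
  have hVm : MeasurableSet V := by
    have h1 : MeasurableSet {u : Fin d → ℝ | t + u ∈ Dom} :=
      (measurable_const_add t) hDom
    have h2 : MeasurableSet {u : Fin d → ℝ | ‖u‖ ≤ ρ} :=
      (isClosed_le continuous_norm continuous_const).measurableSet
    exact h1.inter h2
  -- finiteness of volume V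
  have hVfin : volume V < ⊤ := by
    have hsub : V ⊆ Metric.closedBall 0 ρ := by
      intro u hu; simpa [Metric.mem_closedBall, dist_zero_right] using hu.2
    exact lt_of_le_of_lt (measure_mono hsub) (MeasureTheory.measure_closedBall_lt_top)
  haveI hFin : IsFiniteMeasure (volume.restrict V) :=
    ⟨by rwa [Measure.restrict_apply_univ]⟩
  have hcard : (0:ℝ) ≤ (Fintype.card {α : Fin d → ℕ // ∑ j, α j ≤ ms} : ℝ) := by positivity
  -- monomial bound on V
  have hmono : ∀ u : Fin d → ℝ, ‖u‖ ≤ ρ → ∀ α : {α : Fin d → ℕ // ∑ j, α j ≤ ms}, |∏ j, u j ^ α.1 j| ≤ 1 := by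
    intro u hu α
    rw [Finset.abs_prod]
    apply Finset.prod_le_one (fun j _ => abs_nonneg _)
    intro j _
    rw [abs_pow]
    apply pow_le_one₀ (abs_nonneg _)
    calc |u j| ≤ ‖u‖ := by
          simpa [Real.norm_eq_abs] using norm_le_pi_norm u j
      _ ≤ 1 := hu.trans hρ1
  -- pointwise bound on P
  have hPb : ∀ (q : {α : Fin d → ℕ // ∑ j, α j ≤ ms} → ℝ) (u : Fin d → ℝ), ‖u‖ ≤ ρ →
      |P q u| ≤ (Fintype.card {α : Fin d → ℕ // ∑ j, α j ≤ ms} : ℝ) * ‖q‖ := by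
    intro q u hu
    calc |P q u| ≤ ∑ α : {α : Fin d → ℕ // ∑ j, α j ≤ ms}, |q α * ∏ j, u j ^ α.1 j| := Finset.abs_sum_le_sum_abs _ _
      _ ≤ ∑ _α : {α : Fin d → ℕ // ∑ j, α j ≤ ms}, ‖q‖ := by
          apply Finset.sum_le_sum
          intro α _
          rw [abs_mul]
          calc |q α| * |∏ j, u j ^ α.1 j| ≤ |q α| * 1 :=
                mul_le_mul_of_nonneg_left (hmono u hu α) (abs_nonneg _)
            _ = |q α| := mul_one _
            _ ≤ ‖q‖ := by simpa [Real.norm_eq_abs] using norm_le_pi_norm q α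
      _ = (Fintype.card {α : Fin d → ℕ // ∑ j, α j ≤ ms} : ℝ) * ‖q‖ := by
          rw [Finset.sum_const, Finset.card_univ, nsmul_eq_mul]
  -- continuity of P q
  have hPcont : ∀ q : {α : Fin d → ℕ // ∑ j, α j ≤ ms} → ℝ, Continuous (P q) := by
    intro q
    apply continuous_finset_sum
    intro α _
    exact continuous_const.mul (continuous_finset_prod _ fun j _ => (continuous_apply j).pow _)
  -- linearity facts
  have hPsub : ∀ (q q' : {α : Fin d → ℕ // ∑ j, α j ≤ ms} → ℝ) (u : Fin d → ℝ), P (q - q') u = P q u - P q' u := by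
    intro q q' u
    simp only [hPdef, Pi.sub_apply, sub_mul, Finset.sum_sub_distrib]
  have hPsmul : ∀ (a : ℝ) (q : {α : Fin d → ℕ // ∑ j, α j ≤ ms} → ℝ) (u : Fin d → ℝ), P (a • q) u = a * P q u := by
    intro a q u
    simp only [hPdef, Pi.smul_apply, smul_eq_mul, Finset.mul_sum, mul_assoc]
  -- integrability of |P q| on V
  have hPint : ∀ q : {α : Fin d → ℕ // ∑ j, α j ≤ ms} → ℝ, IntegrableOn (fun u => |P q u|) V := by
    intro q
    apply Integrable.mono' (integrable_const ((Fintype.card {α : Fin d → ℕ // ∑ j, α j ≤ ms} : ℝ) * ‖q‖))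
    · exact ((hPcont q).abs.aestronglyMeasurable)
    · filter_upwards [ae_restrict_mem hVm] with u hu
      rw [Real.norm_eq_abs, abs_abs]
      exact hPb q u hu.2
  set N : ({α : Fin d → ℕ // ∑ j, α j ≤ ms} → ℝ) → ℝ := fun q => ∫ u in V, |P q u| with hNdef
  -- N is Lipschitz hence continuous
  have hNcont : Continuous N := by
    rw [Metric.continuous_iff]
    intro q ε hε
    set K : ℝ := (Fintype.card {α : Fin d → ℕ // ∑ j, α j ≤ ms} : ℝ) * (volume V).toReal + 1 with hK
    have hK0 : 0 < K := by positivity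
    refine ⟨ε / K, by positivity, fun q' hq' => ?_⟩
    have hbound : ∀ q₁ q₂ : {α : Fin d → ℕ // ∑ j, α j ≤ ms} → ℝ, N q₁ ≤ N q₂ + (volume V).toReal *
        ((Fintype.card {α : Fin d → ℕ // ∑ j, α j ≤ ms} : ℝ) * ‖q₁ - q₂‖) := by
      intro q₁ q₂
      have h1 : N q₁ ≤ ∫ u in V, (|P q₂ u| + (Fintype.card {α : Fin d → ℕ // ∑ j, α j ≤ ms} : ℝ) * ‖q₁ - q₂‖) := by
        apply setIntegral_mono_on (hPint q₁)
          ((hPint q₂).add (integrable_const _)) hVm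
        intro u hu
        have := hPb (q₁ - q₂) u hu.2
        rw [hPsub] at this
        have habs := abs_sub_abs_le_abs_sub (P q₁ u) (P q₂ u)
        simp only [Pi.add_apply]
        linarith
      rw [integral_add (hPint q₂) (integrable_const _), setIntegral_const,
        smul_eq_mul] at h1
      change N q₁ ≤ N q₂ + (volume V).toReal * _ at h1
      linarith
    have h1 := hbound q' q
    have h2 := hbound q q'
    have hsym : ‖q - q'‖ = ‖q' - q‖ := by rw [← neg_sub, norm_neg]
    rw [Real.dist_eq, abs_sub_lt_iff]
    have hdist : ‖q' - q‖ < ε / K := by rwa [dist_eq_norm] at hq'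
    have hKof : (volume V).toReal * ((Fintype.card {α : Fin d → ℕ // ∑ j, α j ≤ ms} : ℝ) * ‖q' - q‖) ≤ K * ‖q' - q‖ := by
      rw [hK]
      have : (volume V).toReal * ((Fintype.card {α : Fin d → ℕ // ∑ j, α j ≤ ms} : ℝ) * ‖q' - q‖)
          = ((Fintype.card {α : Fin d → ℕ // ∑ j, α j ≤ ms} : ℝ) * (volume V).toReal) * ‖q' - q‖ := by ring
      rw [this]
      nlinarith [norm_nonneg (q' - q)]
    have hKd : K * ‖q' - q‖ < ε := by
      have := (mul_lt_mul_iff_right₀ hK0).2 hdist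
      rwa [mul_div_cancel₀ _ hK0.ne'] at this
    constructor <;> nlinarith [hsym]
  -- positivity of N on nonzero q
  have hNpos : ∀ q : {α : Fin d → ℕ // ∑ j, α j ≤ ms} → ℝ, q ≠ 0 → 0 < N q := by
    intro q hq
    set pq : MvPolynomial (Fin d) ℝ :=
      ∑ α : {α : Fin d → ℕ // ∑ j, α j ≤ ms}, MvPolynomial.monomial (Finsupp.equivFunOnFinite.symm α.1) (q α) with hpq
    have heval : ∀ u : Fin d → ℝ, P q u = MvPolynomial.eval u pq := by
      intro u
      rw [hpq, map_sum]
      apply Finset.sum_congr rfl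
      intro α _
      rw [MvPolynomial.eval_monomial, Finsupp.prod_pow]
      simp [mul_comm]
    have hpqne : pq ≠ 0 := by
      intro h
      apply hq
      funext β
      have := congrArg (MvPolynomial.coeff (Finsupp.equivFunOnFinite.symm β.1)) h
      rw [hpq, MvPolynomial.coeff_sum] at this
      simp only [MvPolynomial.coeff_monomial, MvPolynomial.coeff_zero] at this
      rw [Finset.sum_eq_single β] at this
      · simpa using this
      · intro α _ hαβ
        rw [if_neg]
        intro hc
        exact hαβ (Subtype.ext (Finsupp.equivFunOnFinite.symm.injective hc))
      · intro hβ; exact absurd (Finset.mem_univ β) hβ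
    have hnull : volume {x : Fin d → ℝ | MvPolynomial.eval x pq = 0} = 0 :=
      mvpoly_zero_set_null d pq hpqne
    rw [hNdef]
    rw [setIntegral_pos_iff_support_of_nonneg_ae]
    · -- 0 < volume (support |P q| ∩ V)
      have hsup : V ⊆ (Function.support fun u => |P q u|) ∪
          {x : Fin d → ℝ | MvPolynomial.eval x pq = 0} := by
        intro u _
        by_cases h : P q u = 0
        · right; rw [Set.mem_setOf_eq, ← heval u]; exact h
        · left; simp [Function.mem_support, abs_eq_zero, h]
      by_contra hcon
      push_neg at hcon
      have h0 : volume ((Function.support fun u => |P q u|) ∩ V) = 0 := le_antisymm hcon zero_le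
      have : volume V ≤ volume (((Function.support fun u => |P q u|) ∩ V) ∪
          {x : Fin d → ℝ | MvPolynomial.eval x pq = 0}) := by
        apply measure_mono
        intro u hu
        rcases hsup hu with h | h
        · exact Or.inl ⟨h, hu⟩
        · exact Or.inr h
      rw [hVdef] at hV
      have hle := this.trans (measure_union_le _ _)
      rw [h0, hnull, add_zero] at hle
      exact absurd (le_antisymm hle zero_le) (ne_of_gt hV)
    · filter_upwards with u using abs_nonneg _
    · exact hPint q
  -- nonemptiness
  have hιne : Nonempty {α : Fin d → ℕ // ∑ j, α j ≤ ms} := ⟨⟨fun _ => 0, by simp⟩⟩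
  haveI := hιne
  -- minimum on the sphere
  have hScomp : IsCompact (Metric.sphere (0 : {α : Fin d → ℕ // ∑ j, α j ≤ ms} → ℝ) 1) := isCompact_sphere 0 1
  have hSne : (Metric.sphere (0 : {α : Fin d → ℕ // ∑ j, α j ≤ ms} → ℝ) 1).Nonempty :=
    NormedSpace.sphere_nonempty.2 zero_le_one
  obtain ⟨q₀, hq₀S, hq₀min⟩ := hScomp.exists_isMinOn hSne hNcont.continuousOn
  set c : ℝ := N q₀ with hcdef
  have hq₀ne : q₀ ≠ 0 := by
    intro h
    rw [h] at hq₀S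
    simp at hq₀S
  have hc0 : 0 < c := hNpos q₀ hq₀ne
  -- norm bound from N
  have hnormN : ∀ q : {α : Fin d → ℕ // ∑ j, α j ≤ ms} → ℝ, c * ‖q‖ ≤ N q := by
    intro q
    by_cases hq : q = 0
    · rw [hq]
      simp only [norm_zero, mul_zero, hNdef]
      apply setIntegral_nonneg hVm
      intro u _; exact abs_nonneg _
    · have hnq : 0 < ‖q‖ := norm_pos_iff.2 hq
      set q' : {α : Fin d → ℕ // ∑ j, α j ≤ ms} → ℝ := ‖q‖⁻¹ • q with hq'def
      have hq'S : q' ∈ Metric.sphere (0 : {α : Fin d → ℕ // ∑ j, α j ≤ ms} → ℝ) 1 := by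
        simp only [mem_sphere_iff_norm, sub_zero, hq'def, norm_smul, norm_inv, norm_norm]
        rw [inv_mul_cancel₀ hnq.ne']
      have hNq' : N q = ‖q‖ * N q' := by
        rw [hNdef]
        simp only
        have : ∀ u, |P q u| = ‖q‖ * |P q' u| := by
          intro u
          have : P q u = ‖q‖ * P q' u := by
            rw [hq'def, hPsmul, ← mul_assoc, mul_inv_cancel₀ hnq.ne', one_mul]
          rw [this, abs_mul, abs_of_pos hnq]
        simp_rw [this]
        rw [integral_const_mul]
      rw [hNq']
      have := hq₀min hq'S
      calc c * ‖q‖ = ‖q‖ * c := mul_comm _ _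
        _ ≤ ‖q‖ * N q' := mul_le_mul_of_nonneg_left this hnq.le
  -- the final constant
  refine ⟨(Fintype.card {α : Fin d → ℕ // ∑ j, α j ≤ ms} : ℝ) * ((1 + L * (volume V).toReal) / c) + L, ?_⟩
  intro f hfm hf0 _hfD hf1 ⟨q, hq⟩ u huD huρ
  -- f integrable
  have hfint : Integrable f := by
    by_contra h
    rw [integral_undef h] at hf1
    norm_num at hf1
  have hcomp : Integrable (fun u => f (t + u)) := hfint.comp_add_left t
  -- rpow bound
  have hrpow : ∀ v : Fin d → ℝ, ‖v‖ ≤ ρ → ‖v‖ ^ s ≤ 1 :=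
    fun v hv => Real.rpow_le_one (norm_nonneg v) (hv.trans hρ1) hs.le
  -- N q ≤ 1 + L * vol V
  have hNle : N q ≤ 1 + L * (volume V).toReal := by
    have h1 : N q ≤ ∫ v in V, (f (t + v) + L) := by
      apply setIntegral_mono_on (hPint q)
        (hcomp.integrableOn.add (integrable_const _)) hVm
      intro v hv
      have happrox : |f (t + v) - P q v| ≤ L * ‖v‖ ^ s := by
        rw [hPeq]; exact hq v hv.1 hv.2
      have hLs : L * ‖v‖ ^ s ≤ L := by
        calc L * ‖v‖ ^ s ≤ L * 1 := mul_le_mul_of_nonneg_left (hrpow v hv.2) hL.le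
          _ = L := mul_one _
      have : |P q v| ≤ |f (t + v)| + L * ‖v‖ ^ s := by
        have habs := abs_sub_abs_le_abs_sub (P q v) (f (t + v))
        rw [abs_sub_comm] at habs
        linarith
      rw [abs_of_nonneg (hf0 _)] at this
      simp only [Pi.add_apply]
      linarith
    rw [integral_add hcomp.integrableOn (integrable_const _), setIntegral_const,
      smul_eq_mul] at h1
    have h2 : ∫ v in V, f (t + v) ≤ 1 := by
      have h3 : ∫ v in V, f (t + v) ≤ ∫ v, f (t + v) := by
        apply setIntegral_le_integral hcomp
        filter_upwards with v using hf0 _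
      have h4 : (∫ v, f (t + v)) = ∫ x, f x := integral_add_left_eq_self f t
      rw [h4, hf1] at h3
      exact h3
    calc N q ≤ (∫ v in V, f (t + v)) + (volume V).toReal * L := h1
      _ ≤ 1 + L * (volume V).toReal := by rw [mul_comm]; linarith
  -- bound on ‖q‖
  have hqnorm : ‖q‖ ≤ (1 + L * (volume V).toReal) / c := by
    rw [le_div_iff₀ hc0]
    calc ‖q‖ * c = c * ‖q‖ := mul_comm _ _
      _ ≤ N q := hnormN q
      _ ≤ 1 + L * (volume V).toReal := hNle
  -- final bound
  have happrox : |f (t + u) - P q u| ≤ L * ‖u‖ ^ s := by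
    rw [hPeq]; exact hq u huD huρ
  have hLs : L * ‖u‖ ^ s ≤ L :=
    (mul_le_mul_of_nonneg_left (hrpow u huρ) hL.le).trans (le_of_eq (mul_one _))
  have habs := abs_sub_abs_le_abs_sub (f (t + u)) (P q u)
  calc |f (t + u)| ≤ (Fintype.card {α : Fin d → ℕ // ∑ j, α j ≤ ms} : ℝ) * ‖q‖ + L := by
        have := hPb q u huρ
        linarith
    _ ≤ (Fintype.card {α : Fin d → ℕ // ∑ j, α j ≤ ms} : ℝ) * ((1 + L * (volume V).toReal) / c) + L := by
        have := mul_le_mul_of_nonneg_left hqnorm hcard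
        linarith
end
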